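/- Let L be a pro-nilpotent L∞-algebra over a Q-algebra with all brackets [−]_n for n ≥ 2 zero except possibly certain higher operations governed by a square-zero operator, arising as L = ħB⟦ħ⟧[−1] for a complete filtered BV∞-algebra B with differential □. Then the map S ↦ e^S − 1 defines a bijection between Maurer–Cartan elements of (L, [−]_□) and Maurer–Cartan elements of the abelian L∞-algebra (L; □, 0, 0, …), i.e. elements T with □(1 + T) = 0. -/

import Mathlib

/-!  STATEMENT 16: For a complete filtered BV∞-algebra `B` with square-zero differential
`□`, the map `S ↦ e^S − 1` is a bijection between the Maurer–Cartan elements of the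
L∞-algebra `L = ħB⟦ħ⟧[−1]` with brackets `[a₁,…,a_k]_□ = [⋯[□,a₁],…,a_k](1)` and the
Maurer–Cartan elements of the abelian L∞-algebra `(L; □, 0, 0, …)`, i.e. the elements
`T` with `□(1 + T) = 0`.

We take `B` a commutative ℚ-algebra with `□` square-zero and `□(1) = 0`, extended
coefficientwise to `B⟦ħ⟧`; `ħB⟦ħ⟧` consists of the power series with vanishing
constant term, on which the exponential and the Maurer–Cartan sum
`Σ_n [S,…,S]_n / n!` converge coefficientwise. -/

open PowerSeries Finset
namespace Stmt16
set_option linter.unusedSectionVars false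
set_option maxHeartbeats 1000000
variable {B : Type*} [CommRing B] [Algebra ℚ B]
noncomputable def CQ (q : ℚ) : PowerSeries B := PowerSeries.C (R := B) (algebraMap ℚ B q)
@[simp] lemma coeff_CQ_mul (q : ℚ) (f : PowerSeries B) (n : ℕ) :
    coeff (R := B) n (CQ q * f) = q • coeff (R := B) n f := by
  simp only [CQ, coeff_C_mul]; rw [Algebra.smul_def]
lemma CQ_zero : (CQ 0 : PowerSeries B) = 0 := by simp [CQ]
lemma CQ_neg (q : ℚ) : (CQ (-q) : PowerSeries B) = -CQ q := by simp [CQ, map_neg]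
lemma CQ_add (q r : ℚ) : (CQ (q + r) : PowerSeries B) = CQ q + CQ r := by simp [CQ, map_add]
@[simp] lemma CQ_one : (CQ 1 : PowerSeries B) = 1 := by simp [CQ]
variable (box : B →ₗ[ℚ] B)
noncomputable def bxh (f : PowerSeries B) : PowerSeries B :=
  PowerSeries.mk fun n => box (PowerSeries.coeff (R := B) n f)
@[simp] lemma coeff_bxh (n : ℕ) (f : PowerSeries B) :
    coeff (R := B) n (bxh box f) = box (coeff (R := B) n f) := coeff_mk _ _
noncomputable def expE (f : PowerSeries B) : PowerSeries B :=
  PowerSeries.mk fun k =>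
    ∑ n ∈ Finset.range (k + 1), (n.factorial : ℚ)⁻¹ • PowerSeries.coeff (R := B) k (f ^ n)
@[simp] lemma coeff_expE (k : ℕ) (f : PowerSeries B) :
    coeff (R := B) k (expE f) = ∑ n ∈ Finset.range (k + 1), (n.factorial : ℚ)⁻¹ • coeff (R := B) k (f ^ n) :=
  coeff_mk _ _
noncomputable def itE (f : PowerSeries B) : ℕ → PowerSeries B → PowerSeries B :=
  Nat.rec (motive := fun _ => PowerSeries B → PowerSeries B)
    (bxh box) (fun _ g x => g (f * x) - f * g x)
@[simp] lemma itE_zero (f x : PowerSeries B) : itE box f 0 x = bxh box x := rfl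
@[simp] lemma itE_succ (f x : PowerSeries B) (n : ℕ) :
    itE box f (n + 1) x = itE box f n (f * x) - f * itE box f n x := rfl
noncomputable def mcE (f : PowerSeries B) : PowerSeries B :=
  PowerSeries.mk fun k =>
    ∑ n ∈ Finset.range (k + 1), (n.factorial : ℚ)⁻¹ • PowerSeries.coeff (R := B) k (itE box f n 1)
@[simp] lemma coeff_mcE (k : ℕ) (f : PowerSeries B) :
    coeff (R := B) k (mcE box f)
      = ∑ n ∈ Finset.range (k + 1), (n.factorial : ℚ)⁻¹ • coeff (R := B) k (itE box f n 1) :=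
  coeff_mk _ _
lemma X_dvd_of_coeff_zero {f : PowerSeries B} (h : coeff (R := B) 0 f = 0) :
    (X : PowerSeries B) ∣ f :=
  X_dvd_iff.2 (by rwa [← coeff_zero_eq_constantCoeff_apply])
lemma X_pow_dvd_pow {f : PowerSeries B} (h : coeff (R := B) 0 f = 0) (n : ℕ) :
    (X : PowerSeries B) ^ n ∣ f ^ n :=
  pow_dvd_pow_of_dvd (X_dvd_of_coeff_zero h) n
lemma bxh_dvd {n : ℕ} {f : PowerSeries B} (h : (X : PowerSeries B) ^ n ∣ f) :
    (X : PowerSeries B) ^ n ∣ bxh box f := by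
  rw [X_pow_dvd_iff] at h ⊢
  intro m hm; simp [bxh, h m hm]
lemma itE_dvd {f : PowerSeries B} (hf : coeff (R := B) 0 f = 0) (n : ℕ) :
    ∀ {m : ℕ} {x : PowerSeries B}, (X : PowerSeries B) ^ m ∣ x →
      (X : PowerSeries B) ^ (n + m) ∣ itE box f n x := by
  induction n with
  | zero => intro m x hx; simpa using bxh_dvd box hx
  | succ n ih =>
    intro m x hx
    have hXf : (X : PowerSeries B) ∣ f := X_dvd_of_coeff_zero hf
    have h1 : (X : PowerSeries B) ^ (n + (m + 1)) ∣ itE box f n (f * x) :=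
      ih (by rw [pow_succ, mul_comm ((X:PowerSeries B)^m)]; exact mul_dvd_mul hXf hx)
    have h2 : (X : PowerSeries B) ^ (n + 1 + m) ∣ f * itE box f n x := by
      rw [show n + 1 + m = 1 + (n + m) by ring, pow_add, pow_one]
      exact mul_dvd_mul hXf (ih hx)
    rw [itE_succ]
    refine dvd_sub ?_ h2
    rwa [show n + 1 + m = n + (m + 1) by ring]

lemma itE_expand (f : PowerSeries B) : ∀ (n : ℕ) (x : PowerSeries B),
    itE box f n x = ∑ k ∈ range (n + 1),
      CQ ((-1 : ℚ) ^ k * (n.choose k : ℚ)) * (f ^ k * bxh box (f ^ (n - k) * x)) := by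
  intro n
  induction n with
  | zero => intro x; simp
  | succ n ih =>
    intro x
    rw [itE_succ, ih (f * x), ih x, Finset.mul_sum]
    have hA : ∀ k ∈ range (n + 1),
        CQ ((-1 : ℚ) ^ k * (n.choose k : ℚ)) * (f ^ k * bxh box (f ^ (n - k) * (f * x)))
          = CQ ((-1 : ℚ) ^ k * (n.choose k : ℚ)) * (f ^ k * bxh box (f ^ (n + 1 - k) * x)) := by
      intro k hk; rw [mem_range] at hk
      have : f ^ (n - k) * (f * x) = f ^ (n + 1 - k) * x := by
        rw [show n + 1 - k = (n - k) + 1 by omega, pow_succ]; ring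
      rw [this]
    rw [Finset.sum_congr rfl hA]
    have hB : ∀ k ∈ range (n + 1),
        f * (CQ ((-1 : ℚ) ^ k * (n.choose k : ℚ)) * (f ^ k * bxh box (f ^ (n - k) * x)))
          = CQ ((-1 : ℚ) ^ k * (n.choose k : ℚ)) * (f ^ (k + 1) * bxh box (f ^ (n - k) * x)) := by
      intro k _; ring
    rw [Finset.sum_congr rfl hB]
    -- abbreviations
    set a : ℕ → PowerSeries B := fun k =>
      CQ ((-1 : ℚ) ^ k * (n.choose k : ℚ)) * (f ^ k * bxh box (f ^ (n + 1 - k) * x)) with ha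
    set b : ℕ → PowerSeries B := fun k =>
      CQ ((-1 : ℚ) ^ k * (n.choose k : ℚ)) * (f ^ (k + 1) * bxh box (f ^ (n - k) * x)) with hb
    set T : ℕ → PowerSeries B := fun k =>
      CQ ((-1 : ℚ) ^ k * ((n + 1).choose k : ℚ)) * (f ^ k * bxh box (f ^ (n + 1 - k) * x)) with hT
    have hT0 : T 0 = a 0 := by simp [hT, ha]
    have hTsucc : ∀ k, T (k + 1)
        = CQ ((-1 : ℚ) ^ (k + 1) * (n.choose (k + 1) : ℚ)) * (f ^ (k + 1) * bxh box (f ^ (n - k) * x))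
          - b k := by
      intro k
      have hc : ((n + 1).choose (k + 1) : ℚ) = (n.choose k : ℚ) + (n.choose (k + 1) : ℚ) := by
        rw [Nat.choose_succ_succ]; push_cast; ring
      have hnk : n + 1 - (k + 1) = n - k := by omega
      rw [hT, hb]
      simp only [hnk]
      rw [hc, mul_add, CQ_add]
      have : ((-1 : ℚ) ^ (k + 1) * (n.choose k : ℚ)) = -((-1 : ℚ) ^ k * (n.choose k : ℚ)) := by
        ring
      rw [this, CQ_neg]
      ring
    have hsplit : ∑ k ∈ range (n + 2), T k = (∑ k ∈ range (n + 1), T (k + 1)) + T 0 :=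
      Finset.sum_range_succ' T (n + 1)
    rw [hsplit]
    have hc1 : ∑ k ∈ range (n + 1),
        CQ ((-1 : ℚ) ^ (k + 1) * (n.choose (k + 1) : ℚ)) * (f ^ (k + 1) * bxh box (f ^ (n - k) * x))
        = ∑ k ∈ range n, a (k + 1) := by
      rw [Finset.sum_range_succ]
      simp only [Nat.choose_succ_self, Nat.cast_zero, mul_zero, CQ_zero, zero_mul, add_zero]
      refine Finset.sum_congr rfl fun k hk => ?_
      rw [ha]
      have hnk : n + 1 - (k + 1) = n - k := by omega
      simp only [hnk]
    calc (∑ k ∈ range (n + 1), a k) - ∑ k ∈ range (n + 1), b k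
        = ((∑ k ∈ range n, a (k + 1)) + a 0) - ∑ k ∈ range (n + 1), b k := by
          rw [← Finset.sum_range_succ' a n]
      _ = (∑ k ∈ range (n + 1), T (k + 1)) + T 0 := by
          rw [hT0]
          have : ∑ k ∈ range (n + 1), T (k + 1)
              = (∑ k ∈ range (n + 1),
                  CQ ((-1 : ℚ) ^ (k + 1) * (n.choose (k + 1) : ℚ))
                    * (f ^ (k + 1) * bxh box (f ^ (n - k) * x)))
                - ∑ k ∈ range (n + 1), b k := by
            rw [← Finset.sum_sub_distrib]
            exact Finset.sum_congr rfl fun k _ => hTsucc k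
          rw [this, hc1]
          abel

lemma triangle_reindex {M : Type*} [AddCommMonoid M] (g : ℕ → ℕ → M) :
    ∀ d : ℕ, ∑ n ∈ range (d + 1), ∑ k ∈ range (n + 1), g k (n - k)
      = ∑ k ∈ range (d + 1), ∑ m ∈ range (d + 1 - k), g k m := by
  intro d
  induction d with
  | zero => simp
  | succ d ih =>
    rw [Finset.sum_range_succ, ih]
    have hR : ∑ k ∈ range (d + 2), ∑ m ∈ range (d + 2 - k), g k m
        = (∑ k ∈ range (d + 1), ∑ m ∈ range (d + 1 - k), g k m)
          + ∑ k ∈ range (d + 2), g k (d + 1 - k) := by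
      rw [Finset.sum_range_succ (fun k => ∑ m ∈ range (d + 2 - k), g k m) (d + 1),
        Finset.sum_range_succ (fun k => g k (d + 1 - k)) (d + 1)]
      have : ∀ k ∈ range (d + 1), ∑ m ∈ range (d + 2 - k), g k m
          = (∑ m ∈ range (d + 1 - k), g k m) + g k (d + 1 - k) := by
        intro k hk; rw [mem_range] at hk
        rw [show d + 2 - k = (d + 1 - k) + 1 by omega, Finset.sum_range_succ]
      rw [Finset.sum_congr rfl this, Finset.sum_add_distrib]
      simp [Nat.sub_self]
      abel
    rw [hR]


lemma sq_triangle_dvd (g : ℕ → ℕ → PowerSeries B) (d : ℕ)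
    (hg : ∀ j m, (X : PowerSeries B) ^ (j + m) ∣ g j m) :
    (X : PowerSeries B) ^ (d + 1) ∣
      (∑ j ∈ range (d + 1), ∑ m ∈ range (d + 1), g j m)
        - ∑ n ∈ range (d + 1), ∑ k ∈ range (n + 1), g k (n - k) := by
  rw [triangle_reindex, ← Finset.sum_sub_distrib]
  refine Finset.dvd_sum fun k hk => ?_
  rw [mem_range] at hk
  rw [← Finset.sum_sdiff_eq_sub (Finset.range_subset_range.2 (by omega))]
  refine Finset.dvd_sum fun m hm => ?_
  rw [Finset.mem_sdiff, mem_range, mem_range] at hm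
  exact dvd_trans (pow_dvd_pow _ (by omega)) (hg k m)

lemma CQ_mul (q r : ℚ) : (CQ (q * r) : PowerSeries B) = CQ q * CQ r := by simp [CQ, map_mul]
lemma bxh_sum {ι : Type*} (s : Finset ι) (f : ι → PowerSeries B) :
    bxh box (∑ i ∈ s, f i) = ∑ i ∈ s, bxh box (f i) := by
  ext n; simp [bxh]
lemma bxh_CQ_mul (q : ℚ) (f : PowerSeries B) :
    bxh box (CQ q * f) = CQ q * bxh box f := by
  ext n; simp only [coeff_bxh, coeff_CQ_mul, map_smul]

-- the truncated exponential and companions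
noncomputable def PP (f : PowerSeries B) (d : ℕ) : PowerSeries B :=
  ∑ a ∈ range (d + 1), CQ ((a.factorial : ℚ)⁻¹) * f ^ a
noncomputable def Em (f : PowerSeries B) (d : ℕ) : PowerSeries B :=
  ∑ j ∈ range (d + 1), CQ ((-1 : ℚ) ^ j * (j.factorial : ℚ)⁻¹) * f ^ j
noncomputable def MM (f : PowerSeries B) (d : ℕ) : PowerSeries B :=
  ∑ n ∈ range (d + 1), CQ ((n.factorial : ℚ)⁻¹) * itE box f n 1

-- T1
lemma expE_trunc {f : PowerSeries B} (hf : coeff (R := B) 0 f = 0) (d : ℕ) :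
    (X : PowerSeries B) ^ (d + 1) ∣ expE f - PP f d := by
  rw [X_pow_dvd_iff]
  intro k hk
  rw [map_sub, sub_eq_zero, coeff_expE, PP, map_sum]
  rw [Finset.sum_subset (Finset.range_subset_range.2 (by omega : k + 1 ≤ d + 1))]
  · exact Finset.sum_congr rfl fun a _ => by rw [coeff_CQ_mul]
  · intro a ha hna
    rw [mem_range] at ha; rw [mem_range] at hna
    rw [X_pow_dvd_iff.1 (X_pow_dvd_pow hf a) k (by omega), smul_zero]

-- T2
lemma mcE_trunc {f : PowerSeries B} (hf : coeff (R := B) 0 f = 0) (d : ℕ) :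
    (X : PowerSeries B) ^ (d + 1) ∣ mcE box f - MM box f d := by
  rw [X_pow_dvd_iff]
  intro k hk
  rw [map_sub, sub_eq_zero, coeff_mcE, MM, map_sum]
  rw [Finset.sum_subset (Finset.range_subset_range.2 (by omega : k + 1 ≤ d + 1))]
  · exact Finset.sum_congr rfl fun a _ => by rw [coeff_CQ_mul]
  · intro n hn hnn
    rw [mem_range] at hn; rw [mem_range] at hnn
    have : (X : PowerSeries B) ^ n ∣ itE box f n 1 := by
      simpa using itE_dvd box hf n (m := 0) (x := 1) (by simp)
    rw [X_pow_dvd_iff.1 this k (by omega), smul_zero]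

lemma factorial_ne (n : ℕ) : ((n.factorial : ℚ)) ≠ 0 :=
  Nat.cast_ne_zero.2 (Nat.factorial_ne_zero n)

lemma CQ_sum {ι : Type*} (s : Finset ι) (q : ι → ℚ) :
    (CQ (∑ i ∈ s, q i) : PowerSeries B) = ∑ i ∈ s, CQ (q i) := by
  simp [CQ, map_sum]
lemma CQ_mul_mul (q r : ℚ) (x y : PowerSeries B) :
    (CQ q * x) * (CQ r * y) = CQ (q * r) * (x * y) := by
  rw [CQ_mul]; ring
lemma CQ_mul_CQ_mul (q r : ℚ) (y : PowerSeries B) :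
    CQ q * (CQ r * y) = CQ (q * r) * y := by
  rw [CQ_mul]; ring

-- T3
lemma MM_approx {f : PowerSeries B} (hf : coeff (R := B) 0 f = 0) (d : ℕ) :
    (X : PowerSeries B) ^ (d + 1) ∣ Em f d * bxh box (PP f d) - MM box f d := by
  classical
  set g : ℕ → ℕ → PowerSeries B := fun j m =>
    CQ ((-1 : ℚ) ^ j * (j.factorial : ℚ)⁻¹ * (m.factorial : ℚ)⁻¹) * (f ^ j * bxh box (f ^ m))
    with hgdef
  have hg : ∀ j m, (X : PowerSeries B) ^ (j + m) ∣ g j m := by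
    intro j m
    have : (X : PowerSeries B) ^ (j + m) ∣ f ^ j * bxh box (f ^ m) := by
      rw [pow_add]
      exact mul_dvd_mul (X_pow_dvd_pow hf j) (bxh_dvd box (X_pow_dvd_pow hf m))
    exact Dvd.dvd.mul_left this _
  have hEm : Em f d * bxh box (PP f d) = ∑ j ∈ range (d + 1), ∑ m ∈ range (d + 1), g j m := by
    rw [Em, PP, bxh_sum, Finset.sum_mul_sum]
    refine Finset.sum_congr rfl fun j _ => Finset.sum_congr rfl fun m _ => ?_
    show (CQ ((-1 : ℚ) ^ j * (j.factorial : ℚ)⁻¹) * f ^ j)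
        * (bxh box (CQ ((m.factorial : ℚ)⁻¹) * f ^ m))
      = CQ ((-1 : ℚ) ^ j * (j.factorial : ℚ)⁻¹ * (m.factorial : ℚ)⁻¹)
          * (f ^ j * bxh box (f ^ m))
    rw [bxh_CQ_mul, CQ_mul_mul]
  have hMM : MM box f d = ∑ n ∈ range (d + 1), ∑ k ∈ range (n + 1), g k (n - k) := by
    rw [MM]
    refine Finset.sum_congr rfl fun n _ => ?_
    rw [itE_expand box f n 1, Finset.mul_sum]
    refine Finset.sum_congr rfl fun k hk => ?_
    rw [mem_range] at hk
    show CQ ((n.factorial : ℚ)⁻¹)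
        * (CQ ((-1 : ℚ) ^ k * (n.choose k : ℚ)) * (f ^ k * bxh box (f ^ (n - k) * 1)))
      = CQ ((-1 : ℚ) ^ k * (k.factorial : ℚ)⁻¹ * ((n - k).factorial : ℚ)⁻¹)
          * (f ^ k * bxh box (f ^ (n - k)))
    rw [mul_one, CQ_mul_CQ_mul]
    congr 1
    rw [Nat.cast_choose ℚ (by omega : k ≤ n)]
    have h1 := factorial_ne n; have h2 := factorial_ne k; have h3 := factorial_ne (n - k)
    field_simp
    try ring
  rw [hEm, hMM]
  exact sq_triangle_dvd g d hg

-- alternating sum inic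
lemma alt_sum_fact (n : ℕ) :
    (∑ k ∈ range (n + 1), (k.factorial : ℚ)⁻¹ * ((-1 : ℚ) ^ (n - k) * ((n - k).factorial : ℚ)⁻¹))
      = if n = 0 then 1 else 0 := by
  have key : (n.factorial : ℚ)
      * ∑ k ∈ range (n + 1), (k.factorial : ℚ)⁻¹ * ((-1 : ℚ) ^ (n - k) * ((n - k).factorial : ℚ)⁻¹)
      = ∑ k ∈ range (n + 1), (-1 : ℚ) ^ (n - k) * (n.choose k : ℚ) := by
    rw [Finset.mul_sum]
    refine Finset.sum_congr rfl fun k hk => ?_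
    rw [mem_range] at hk
    rw [Nat.cast_choose ℚ (by omega : k ≤ n)]
    have h1 := factorial_ne n; have h2 := factorial_ne k; have h3 := factorial_ne (n - k)
    field_simp
    try ring
  have hrefl : ∑ k ∈ range (n + 1), (-1 : ℚ) ^ (n - k) * (n.choose k : ℚ)
      = ∑ k ∈ range (n + 1), (-1 : ℚ) ^ k * (n.choose k : ℚ) := by
    have := Finset.sum_range_reflect (fun j => (-1 : ℚ) ^ j * (n.choose (n - j) : ℚ)) (n + 1)
    simp only [Nat.add_sub_cancel] at this
    calc ∑ k ∈ range (n + 1), (-1 : ℚ) ^ (n - k) * (n.choose k : ℚ)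
        = ∑ k ∈ range (n + 1), (-1 : ℚ) ^ (n - k) * (n.choose (n - (n - k)) : ℚ) := by
          refine Finset.sum_congr rfl fun k hk => ?_
          rw [mem_range] at hk
          rw [show n - (n - k) = k by omega]
      _ = ∑ k ∈ range (n + 1), (-1 : ℚ) ^ k * (n.choose (n - k) : ℚ) := this
      _ = ∑ k ∈ range (n + 1), (-1 : ℚ) ^ k * (n.choose k : ℚ) := by
          refine Finset.sum_congr rfl fun k hk => ?_
          rw [mem_range] at hk
          rw [Nat.choose_symm (by omega : k ≤ n)]
  have halt : ∑ k ∈ range (n + 1), (-1 : ℚ) ^ k * (n.choose k : ℚ)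
      = if n = 0 then 1 else 0 := by
    have h := Int.alternating_sum_range_choose (n := n)
    have h2 : ((∑ i ∈ range (n + 1), (-1 : ℤ) ^ i * (n.choose i : ℤ) : ℤ) : ℚ)
        = ((if n = 0 then 1 else 0 : ℤ) : ℚ) := by rw [h]
    push_cast at h2
    rcases Nat.eq_zero_or_pos n with rfl | hn
    · simpa using h2
    · rw [if_neg (by omega : ¬ n = 0)] at h2 ⊢
      simpa using h2
  have hn := factorial_ne n
  calc (∑ k ∈ range (n + 1), (k.factorial : ℚ)⁻¹ * ((-1 : ℚ) ^ (n - k) * ((n - k).factorial : ℚ)⁻¹))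
      = (n.factorial : ℚ)⁻¹ * ((n.factorial : ℚ) * _) := by rw [← mul_assoc, inv_mul_cancel₀ hn, one_mul]
    _ = (n.factorial : ℚ)⁻¹ * (if n = 0 then 1 else 0) := by rw [key, hrefl, halt]
    _ = if n = 0 then 1 else 0 := by split <;> simp [*]

-- T4
lemma PEm_one {f : PowerSeries B} (hf : coeff (R := B) 0 f = 0) (d : ℕ) :
    (X : PowerSeries B) ^ (d + 1) ∣ PP f d * Em f d - 1 := by
  classical
  set g : ℕ → ℕ → PowerSeries B := fun a j =>
    CQ ((a.factorial : ℚ)⁻¹ * ((-1 : ℚ) ^ j * (j.factorial : ℚ)⁻¹)) * f ^ (a + j) with hgdef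
  have hg : ∀ a j, (X : PowerSeries B) ^ (a + j) ∣ g a j :=
    fun a j => Dvd.dvd.mul_left (X_pow_dvd_pow hf (a + j)) _
  have hPE : PP f d * Em f d = ∑ a ∈ range (d + 1), ∑ j ∈ range (d + 1), g a j := by
    rw [PP, Em, Finset.sum_mul_sum]
    refine Finset.sum_congr rfl fun a _ => Finset.sum_congr rfl fun j _ => ?_
    show (CQ ((a.factorial : ℚ)⁻¹) * f ^ a) * (CQ ((-1 : ℚ) ^ j * (j.factorial : ℚ)⁻¹) * f ^ j)
      = CQ ((a.factorial : ℚ)⁻¹ * ((-1 : ℚ) ^ j * (j.factorial : ℚ)⁻¹)) * f ^ (a + j)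
    rw [CQ_mul_mul, pow_add]
  have htri : ∑ n ∈ range (d + 1), ∑ k ∈ range (n + 1), g k (n - k) = 1 := by
    have hterm : ∀ n ∈ range (d + 1), ∑ k ∈ range (n + 1), g k (n - k)
        = if n = 0 then 1 else 0 := by
      intro n _
      have h1 : ∑ k ∈ range (n + 1), g k (n - k)
          = CQ (∑ k ∈ range (n + 1),
              (k.factorial : ℚ)⁻¹ * ((-1 : ℚ) ^ (n - k) * ((n - k).factorial : ℚ)⁻¹)) * f ^ n := by
        rw [CQ_sum, Finset.sum_mul]
        refine Finset.sum_congr rfl fun k hk => ?_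
        rw [mem_range] at hk
        show CQ ((k.factorial : ℚ)⁻¹ * ((-1 : ℚ) ^ (n - k) * ((n - k).factorial : ℚ)⁻¹))
            * f ^ (k + (n - k))
          = CQ ((k.factorial : ℚ)⁻¹ * ((-1 : ℚ) ^ (n - k) * ((n - k).factorial : ℚ)⁻¹)) * f ^ n
        rw [show k + (n - k) = n by omega]
      rw [h1, alt_sum_fact]
      split
      · next h => subst h; simp
      · simp [CQ_zero]
    rw [Finset.sum_congr rfl hterm, Finset.sum_ite_eq' (range (d + 1)) 0 (fun _ => (1 : PowerSeries B))]
    simp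
  rw [hPE, ← htri]
  exact sq_triangle_dvd g d hg

lemma bxh_sub (f g : PowerSeries B) : bxh box (f - g) = bxh box f - bxh box g := by
  ext n; simp [bxh]

-- main identity : □(e^S) = e^S · MC(S)
lemma main_id {f : PowerSeries B} (hf : coeff (R := B) 0 f = 0) :
    bxh box (expE f) = expE f * mcE box f := by
  have key : ∀ d : ℕ, (X : PowerSeries B) ^ (d + 1) ∣ bxh box (expE f) - expE f * mcE box f := by
    intro d
    have h1 := expE_trunc hf d
    have h2 := mcE_trunc box hf d
    have h3 := MM_approx box hf d
    have h4 := PEm_one hf d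
    have hb : (X : PowerSeries B) ^ (d + 1) ∣ bxh box (expE f) - bxh box (PP f d) := by
      rw [← bxh_sub]; exact bxh_dvd box h1
    have hm : (X : PowerSeries B) ^ (d + 1) ∣ expE f * mcE box f - PP f d * MM box f d := by
      have : expE f * mcE box f - PP f d * MM box f d
          = expE f * (mcE box f - MM box f d) + (expE f - PP f d) * MM box f d := by ring
      rw [this]
      exact dvd_add (Dvd.dvd.mul_left h2 _) (Dvd.dvd.mul_right h1 _)
    have hpm : (X : PowerSeries B) ^ (d + 1) ∣
        PP f d * MM box f d - PP f d * (Em f d * bxh box (PP f d)) := by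
      have : PP f d * MM box f d - PP f d * (Em f d * bxh box (PP f d))
          = -(PP f d * (Em f d * bxh box (PP f d) - MM box f d)) := by ring
      rw [this]
      exact dvd_neg.2 (Dvd.dvd.mul_left h3 _)
    have hfin : (X : PowerSeries B) ^ (d + 1) ∣
        PP f d * (Em f d * bxh box (PP f d)) - bxh box (PP f d) := by
      have : PP f d * (Em f d * bxh box (PP f d)) - bxh box (PP f d)
          = (PP f d * Em f d - 1) * bxh box (PP f d) := by ring
      rw [this]
      exact Dvd.dvd.mul_right h4 _
    have : bxh box (expE f) - expE f * mcE box f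
        = (bxh box (expE f) - bxh box (PP f d))
          - (expE f * mcE box f - PP f d * MM box f d)
          - (PP f d * MM box f d - PP f d * (Em f d * bxh box (PP f d)))
          - (PP f d * (Em f d * bxh box (PP f d)) - bxh box (PP f d)) := by ring
    rw [this]
    exact dvd_sub (dvd_sub (dvd_sub hb hm) hpm) hfin
  ext d
  have := X_pow_dvd_iff.1 (key d) d (by omega)
  rw [map_sub, sub_eq_zero] at this
  simpa using this

-- L2
lemma pow_sub_pow_dvd {f g : PowerSeries B} {k : ℕ}
    (hf : coeff (R := B) 0 f = 0) (hg : coeff (R := B) 0 g = 0)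
    (h : (X : PowerSeries B) ^ k ∣ f - g) :
    ∀ n, 2 ≤ n → (X : PowerSeries B) ^ (k + 1) ∣ f ^ n - g ^ n := by
  have hXf := X_dvd_of_coeff_zero hf
  have hXg := X_dvd_of_coeff_zero hg
  have key : ∀ n, (X : PowerSeries B) ^ (k + 1) ∣ f ^ (n + 2) - g ^ (n + 2) := by
    intro n
    induction n with
    | zero =>
      have : f ^ 2 - g ^ 2 = f * (f - g) + (f - g) * g := by ring
      rw [this, pow_succ, mul_comm ((X:PowerSeries B)^k)]
      exact dvd_add (mul_dvd_mul hXf h) (by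
        rw [mul_comm (X:PowerSeries B)]; exact mul_dvd_mul h hXg)
    | succ n ih =>
      have : f ^ (n + 3) - g ^ (n + 3) = f * (f ^ (n+2) - g ^ (n+2)) + (f - g) * g ^ (n+2) := by
        ring
      rw [this]
      refine dvd_add (Dvd.dvd.mul_left ih f) ?_
      rw [pow_succ]
      exact mul_dvd_mul h (dvd_pow hXg (by omega))
  intro n hn
  obtain ⟨m, rfl⟩ : ∃ m, n = m + 2 := ⟨n - 2, by omega⟩
  exact key m


lemma coeff_expE_sub {f g : PowerSeries B} {k : ℕ}
    (hf : coeff (R := B) 0 f = 0) (hg : coeff (R := B) 0 g = 0)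
    (h : (X : PowerSeries B) ^ k ∣ f - g) :
    coeff (R := B) k (expE f) - coeff (R := B) k (expE g) = coeff (R := B) k f - coeff (R := B) k g := by
  rcases Nat.eq_zero_or_pos k with rfl | hk
  · simp [hf, hg]
  rw [coeff_expE, coeff_expE, ← Finset.sum_sub_distrib]
  have hterm : ∀ n ∈ Finset.range (k + 1),
      (n.factorial : ℚ)⁻¹ • coeff (R := B) k (f ^ n) - (n.factorial : ℚ)⁻¹ • coeff (R := B) k (g ^ n)
        = if n = 1 then coeff (R := B) k f - coeff (R := B) k g else 0 := by
    intro n hn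
    rcases n with _ | n
    · simp
    rcases n with _ | n
    · simp [Nat.factorial]
    · have h2 := pow_sub_pow_dvd hf hg h (n + 2) (by omega)
      have hz : coeff (R := B) k (f ^ (n+2) - g ^ (n+2)) = 0 :=
        X_pow_dvd_iff.1 h2 k (by omega)
      rw [← smul_sub, ← map_sub]
      simp only [show n + 1 + 1 = n + 2 from rfl, hz, smul_zero]
      simp
  rw [Finset.sum_congr rfl hterm, Finset.sum_ite_eq' (Finset.range (k+1)) 1
    (fun _ => coeff (R := B) k f - coeff (R := B) k g)]
  simp [Finset.mem_range, hk]

lemma expE_injOn {f g : PowerSeries B}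
    (hf : coeff (R := B) 0 f = 0) (hg : coeff (R := B) 0 g = 0) (h : expE f = expE g) : f = g := by
  have key : ∀ k, (X : PowerSeries B) ^ k ∣ f - g := by
    intro k
    induction k with
    | zero => simp
    | succ k ih =>
      rw [X_pow_dvd_iff]
      intro m hm
      rcases Nat.lt_or_ge m k with hmk | hmk
      · exact X_pow_dvd_iff.1 ih m hmk
      · have hm' : m = k := by omega
        subst hm'
        have := coeff_expE_sub hf hg ih
        rw [h, sub_self] at this
        rw [map_sub]
        exact this.symm
  ext k
  have := X_pow_dvd_iff.1 (key (k + 1)) k (by omega)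
  rw [map_sub, sub_eq_zero] at this
  exact this

lemma coeff_zero_expE (f : PowerSeries B) : coeff (R := B) 0 (expE f) = 1 := by simp

-- the recursive approximation for surjectivity
noncomputable def approx (t : PowerSeries B) : ℕ → PowerSeries B
  | 0 => 0
  | (k+1) => approx t k
      + PowerSeries.C (R := B) (coeff (R := B) (k+1) (1 + t) - coeff (R := B) (k+1) (expE (approx t k))) * X ^ (k+1)

lemma coeff_C_mul_X_pow' (c : B) (m j : ℕ) :
    coeff (R := B) j (PowerSeries.C (R := B) c * X ^ m) = if j = m then c else 0 := by
  rw [coeff_C_mul, coeff_X_pow]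
  split <;> simp

lemma ap_coeff_zero (t : PowerSeries B) : ∀ k, coeff (R := B) 0 (approx t k) = 0 := by
  intro k
  induction k with
  | zero => simp [approx]
  | succ k ih => rw [approx, map_add, ih, coeff_C_mul_X_pow']; simp

lemma ap_high (t : PowerSeries B) : ∀ k j, k < j → coeff (R := B) j (approx t k) = 0 := by
  intro k
  induction k with
  | zero => intro j _; simp [approx]
  | succ k ih =>
    intro j hj
    rw [approx, map_add, ih j (by omega), coeff_C_mul_X_pow', if_neg (by omega)]
    simp

lemma ap_dvd_succ (t : PowerSeries B) (k : ℕ) :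
    (X : PowerSeries B) ^ (k + 1) ∣ approx t (k + 1) - approx t k := by
  rw [approx]
  simp only [add_sub_cancel_left]
  exact Dvd.dvd.mul_left dvd_rfl _

lemma ap_stable' (t : PowerSeries B) : ∀ k k', k ≤ k' → ∀ j, j ≤ k →
    coeff (R := B) j (approx t k') = coeff (R := B) j (approx t k) := by
  intro k k' hk
  induction k' with
  | zero => intro j hj; rw [Nat.le_zero.1 hk]
  | succ k' ih =>
    intro j hj
    rcases Nat.lt_or_ge k (k' + 1) with h | h
    · have hk' : k ≤ k' := by omega
      rw [← ih hk' j hj]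
      have := X_pow_dvd_iff.1 (ap_dvd_succ t k') j (by omega)
      rw [map_sub, sub_eq_zero] at this
      exact this
    · have : k = k' + 1 := by omega
      rw [this]

lemma ap_exp {t : PowerSeries B} (ht : coeff (R := B) 0 t = 0) :
    ∀ k, ∀ j, j ≤ k → coeff (R := B) j (expE (approx t k)) = coeff (R := B) j (1 + t) := by
  intro k
  induction k with
  | zero =>
    intro j hj
    rw [Nat.le_zero.1 hj]
    rw [coeff_zero_expE, map_add, ht]
    simp
  | succ k ih =>
    intro j hj
    have hdvd : (X : PowerSeries B) ^ (k + 1) ∣ approx t (k + 1) - approx t k :=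
      ap_dvd_succ t k
    rcases Nat.lt_or_ge j (k + 1) with h | h
    · have h0 := coeff_expE_sub (ap_coeff_zero t (k + 1)) (ap_coeff_zero t k)
        (dvd_trans (pow_dvd_pow (X : PowerSeries B) (by omega : j ≤ k + 1)) hdvd)
      have hcj : coeff (R := B) j (approx t (k + 1)) = coeff (R := B) j (approx t k) := by
        have := X_pow_dvd_iff.1 hdvd j (by omega)
        rw [map_sub, sub_eq_zero] at this
        exact this
      rw [hcj, sub_self] at h0
      have := sub_eq_zero.1 h0
      rw [this, ih j (by omega)]
    · have hj' : j = k + 1 := by omega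
      subst hj'
      have h0 := coeff_expE_sub (ap_coeff_zero t (k + 1)) (ap_coeff_zero t k) hdvd
      have hc : coeff (R := B) (k + 1) (approx t (k + 1)) - coeff (R := B) (k + 1) (approx t k)
          = coeff (R := B) (k + 1) (1 + t) - coeff (R := B) (k + 1) (expE (approx t k)) := by
        rw [approx, map_add, coeff_C_mul_X_pow', if_pos rfl]
        ring
      rw [hc] at h0
      have := sub_eq_iff_eq_add.1 h0
      rw [this]
      ring

noncomputable def apLim (t : PowerSeries B) : PowerSeries B :=
  PowerSeries.mk fun k => coeff (R := B) k (approx t k)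

lemma apLim_coeff_zero (t : PowerSeries B) : coeff (R := B) 0 (apLim t) = 0 := by
  simp [apLim, ap_coeff_zero]

lemma apLim_dvd (t : PowerSeries B) (k : ℕ) :
    (X : PowerSeries B) ^ (k + 1) ∣ apLim t - approx t k := by
  rw [X_pow_dvd_iff]
  intro m hm
  rw [map_sub, sub_eq_zero]
  show coeff (R := B) m (PowerSeries.mk fun k => coeff (R := B) k (approx t k)) = _
  rw [coeff_mk]
  exact (ap_stable' t m k (by omega) m le_rfl).symm

lemma expE_apLim {t : PowerSeries B} (ht : coeff (R := B) 0 t = 0) :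
    expE (apLim t) = 1 + t := by
  ext d
  have h0 := coeff_expE_sub (apLim_coeff_zero t) (ap_coeff_zero t d)
    (dvd_trans (pow_dvd_pow (X : PowerSeries B) (by omega : d ≤ d + 1)) (apLim_dvd t d))
  have hcd : coeff (R := B) d (apLim t) = coeff (R := B) d (approx t d) := by
    have := X_pow_dvd_iff.1 (apLim_dvd t d) d (by omega)
    rw [map_sub, sub_eq_zero] at this
    exact this
  rw [hcd, sub_self] at h0
  rw [sub_eq_zero.1 h0, ap_exp ht d d le_rfl]

lemma isUnit_expE (f : PowerSeries B) : IsUnit (expE f) := by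
  rw [PowerSeries.isUnit_iff_constantCoeff, ← coeff_zero_eq_constantCoeff_apply,
    coeff_zero_expE]
  exact isUnit_one

lemma mcE_eq_zero {f : PowerSeries B} (hf : coeff (R := B) 0 f = 0)
    (h : bxh box (expE f) = 0) : mcE box f = 0 := by
  have := main_id box hf
  rw [h] at this
  exact ((IsUnit.mul_right_eq_zero (isUnit_expE f)).1 this.symm)

end Stmt16

theorem stmt16
    (B : Type*) [CommRing B] [Algebra ℚ B]
    (box : B →ₗ[ℚ] B)
    (hsq : ∀ x, box (box x) = 0)
    (hone : box 1 = 0) :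
    -- `□` extended coefficientwise to `B⟦ħ⟧`
    let boxh : PowerSeries B → PowerSeries B :=
      fun f => PowerSeries.mk fun n => box (PowerSeries.coeff (R := B) n f)
    -- the exponential of a power series with vanishing constant term
    let expPS : PowerSeries B → PowerSeries B :=
      fun f => PowerSeries.mk fun k =>
        ∑ n ∈ Finset.range (k + 1), (n.factorial : ℚ)⁻¹ • PowerSeries.coeff (R := B) k (f ^ n)
    -- the iterated commutators `[⋯[□, f], …, f]`
    let it : PowerSeries B → ℕ → PowerSeries B → PowerSeries B :=
      fun f => Nat.rec (motive := fun _ => PowerSeries B → PowerSeries B)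
        boxh (fun _ g x => g (f * x) - f * g x)
    -- the Maurer–Cartan sum `Σ_n [f,…,f]_n / n!`
    let mc : PowerSeries B → PowerSeries B := fun f =>
      PowerSeries.mk fun k =>
        ∑ n ∈ Finset.range (k + 1), (n.factorial : ℚ)⁻¹ • PowerSeries.coeff (R := B) k (it f n 1)
    -- `S ↦ e^S − 1` is a bijection from MC elements of `(ħB⟦ħ⟧[−1], [−]_□)` to the
    -- MC elements of the abelian L∞-structure, i.e. `{T : □(1 + T) = 0}`
    Set.BijOn (fun f => expPS f - 1)
      {f | PowerSeries.coeff (R := B) 0 f = 0 ∧ mc f = 0}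
      {t | PowerSeries.coeff (R := B) 0 t = 0 ∧ boxh (1 + t) = 0} := by

  intro boxh expPS it mc
  show Set.BijOn (fun f => Stmt16.expE f - 1)
    {f | PowerSeries.coeff (R := B) 0 f = 0 ∧ Stmt16.mcE box f = 0}
    {t | PowerSeries.coeff (R := B) 0 t = 0 ∧ Stmt16.bxh box (1 + t) = 0}
  open Stmt16 PowerSeries in
  refine ⟨?_, ?_, ?_⟩
  · rintro f ⟨hf0, hmc⟩
    constructor
    · show coeff (R := B) 0 (Stmt16.expE f - 1) = 0
      rw [map_sub, Stmt16.coeff_zero_expE]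
      simp
    · show Stmt16.bxh box (1 + (Stmt16.expE f - 1)) = 0
      rw [show (1 : PowerSeries B) + (Stmt16.expE f - 1) = Stmt16.expE f by ring,
        Stmt16.main_id box hf0, hmc, mul_zero]
  · rintro f ⟨hf0, _⟩ g ⟨hg0, _⟩ h
    have h' : Stmt16.expE f = Stmt16.expE g := by
      have h2 : Stmt16.expE f - 1 = Stmt16.expE g - 1 := h
      exact sub_left_inj.1 h2
    exact Stmt16.expE_injOn hf0 hg0 h'
  · rintro t ⟨ht0, htb⟩
    refine ⟨Stmt16.apLim t, ⟨Stmt16.apLim_coeff_zero t, ?_⟩, ?_⟩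
    · refine Stmt16.mcE_eq_zero box (Stmt16.apLim_coeff_zero t) ?_
      rw [Stmt16.expE_apLim ht0]
      exact htb
    · show Stmt16.expE (Stmt16.apLim t) - 1 = t
      rw [Stmt16.expE_apLim ht0]
      ring
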